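/- There exist a strictly increasing sequence of critical slopes 0 = v₀* < v₁* < v₂* < ⋯ and a strictly increasing sequence of areas 0 = a₀⁺ < a₁⁻ < a₁⁺ < a₂⁻ < a₂⁺ < ⋯ with a_ℓ^± ∈ [ℓw, 4ℓ] for every ℓ ≥ 1, such that: (1) for every v ∈ [0, v₁*) the pair (0, 0) is the unique minimizer of F_v; (2) for every ℓ ≥ 1 with v_ℓ* < 1 + ℓw/σ one has a_ℓ⁻ = ℓw, and for every v ∈ (v_ℓ*, 1 + ℓw/σ) the unique minimizer of F_v is (ℓ, ℓw); (3) for every ℓ ≥ 1 there is a continuous increasing bijection a_ℓ : [max(v_ℓ*, 1 + ℓw/σ), v_{ℓ+1}*] → [a_ℓ⁻, a_ℓ⁺] such that for every v in the open interval (max(v_ℓ*, 1 + ℓw/σ), v_{ℓ+1}*) the unique minimizer of F_v is (ℓ, a_ℓ(v)); (4) at each critical slope there is coexistence: F_{v_ℓ*}(ℓ−1, a_{ℓ−1}⁺) = F_{v_ℓ*}(ℓ, a_ℓ⁻) = min F_{v_ℓ*}, and for every ℓ ≥ 2 the per-layer areas satisfy a_{ℓ−1}⁺/(ℓ−1) >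 a_ℓ⁻/ℓ, equivalently the plaquette radii satisfy r²_{ℓ−1}(a_{ℓ−1}⁺) < r²_ℓ(a_ℓ⁻). -/

import Mathlib

/-- Surface tension of the type-2 stack of `ℓ` layers and area `a`:
`τ²_ℓ(a) = 8ℓ − 2√((4ℓ−a)(4−w)ℓ)`. -/
noncomputable def tau2 (w : ℝ) (ℓ : ℕ) (a : ℝ) : ℝ :=
  8 * (ℓ : ℝ) - 2 * Real.sqrt ((4 * (ℓ : ℝ) - a) * ((4 - w) * (ℓ : ℝ)))

/-- `G²_ℓ(a) = τ²_ℓ(a) + a²/(2σ)` (the finite branch). -/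
noncomputable def G2 (w σ : ℝ) (ℓ : ℕ) (a : ℝ) : ℝ :=
  tau2 w ℓ a + a ^ 2 / (2 * σ)

/-- Admissible pairs `(ℓ, a)` for the type-2 variational problem: either the empty stack
`(0, 0)`, or `ℓ ≥ 1` with `a ∈ [ℓw, 4ℓ]`.  (Outside this set `G²_ℓ(a) = +∞`.) -/
def Adm2 (w : ℝ) (p : ℕ × ℝ) : Prop :=
  (p.1 = 0 ∧ p.2 = 0) ∨ (1 ≤ p.1 ∧ (p.1 : ℝ) * w ≤ p.2 ∧ p.2 ≤ 4 * (p.1 : ℝ))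

/-- The objective `F_v(ℓ, a) = −v·a + G²_ℓ(a)` of the type-2 variational problem. -/
noncomputable def F2 (w σ v : ℝ) (p : ℕ × ℝ) : ℝ :=
  -v * p.2 + G2 w σ p.1 p.2

/-- `p` is the unique minimizer of `F_v` over admissible type-2 pairs. -/
def UniqueMin2 (w σ v : ℝ) (p : ℕ × ℝ) : Prop :=
  Adm2 w p ∧ (∀ q, Adm2 w q → F2 w σ v p ≤ F2 w σ v q) ∧
    ∀ q, Adm2 w q → (∀ q', Adm2 w q' → F2 w σ v q ≤ F2 w σ v q') → q = p

namespace VP2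

/-- the kink slope `1 + ℓ w / σ`. -/
noncomputable def crit (w σ : ℝ) (ℓ : ℕ) : ℝ := 1 + (ℓ : ℝ) * w / σ

/-- derivative of `a ↦ G2 w σ ℓ a`. -/
noncomputable def hfun (w σ : ℝ) (ℓ : ℕ) (a : ℝ) : ℝ :=
  (4 - w) * (ℓ : ℝ) / Real.sqrt ((4 * (ℓ : ℝ) - a) * ((4 - w) * (ℓ : ℝ))) + a / σ

section basic

variable {w σ : ℝ}

lemma sqrt_at_lw (hw4 : w < 4) (ℓ : ℕ) :
    Real.sqrt ((4 * (ℓ : ℝ) - (ℓ : ℝ) * w) * ((4 - w) * (ℓ : ℝ))) = (4 - w) * (ℓ : ℝ) := by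
  have h : (4 * (ℓ : ℝ) - (ℓ : ℝ) * w) = (4 - w) * (ℓ : ℝ) := by ring
  have h0 : (0:ℝ) ≤ (4 - w) * (ℓ : ℝ) := by
    have : (0:ℝ) ≤ (ℓ : ℝ) := Nat.cast_nonneg ℓ
    nlinarith
  rw [h, Real.sqrt_mul_self h0]

lemma hfun_at_lw (hw4 : w < 4) {ℓ : ℕ} (hl : 1 ≤ ℓ) :
    hfun w σ ℓ ((ℓ : ℝ) * w) = crit w σ ℓ := by
  have hl' : (1 : ℝ) ≤ (ℓ : ℝ) := by exact_mod_cast hl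
  have hc : (0:ℝ) < (4 - w) * (ℓ : ℝ) := by nlinarith
  rw [hfun, sqrt_at_lw hw4, div_self (ne_of_gt hc), crit]

lemma sq_sqrt_arg (hw4 : w < 4) {ℓ : ℕ} {a : ℝ} (ha : a ≤ 4 * (ℓ : ℝ)) :
    (Real.sqrt ((4 * (ℓ : ℝ) - a) * ((4 - w) * (ℓ : ℝ)))) ^ 2
      = (4 * (ℓ : ℝ) - a) * ((4 - w) * (ℓ : ℝ)) := by
  have hl' : (0 : ℝ) ≤ (ℓ : ℝ) := Nat.cast_nonneg ℓ
  apply Real.sq_sqrt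
  have h1 : (0:ℝ) ≤ 4 * (ℓ : ℝ) - a := by linarith
  exact mul_nonneg h1 (by nlinarith)

/-- The fundamental lower bound: any admissible `a` pays at least `(a-α)²/(2σ)`
above the value at the point `α` satisfying first-order optimality. -/
lemma F2_lower (hw4 : w < 4) (hσ : 0 < σ) {ℓ : ℕ} (hl : 1 ≤ ℓ) {α a v : ℝ}
    (hα1 : (ℓ : ℝ) * w ≤ α) (hα2 : α < 4 * (ℓ : ℝ))
    (ha1 : (ℓ : ℝ) * w ≤ a) (ha2 : a ≤ 4 * (ℓ : ℝ))
    (hκ : (α = (ℓ : ℝ) * w ∧ v ≤ crit w σ ℓ) ∨ hfun w σ ℓ α = v) :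
    F2 w σ v (ℓ, α) + (a - α) ^ 2 / (2 * σ) ≤ F2 w σ v (ℓ, a) := by
  have hl' : (1 : ℝ) ≤ (ℓ : ℝ) := by exact_mod_cast hl
  have hc : (0:ℝ) < (4 - w) * (ℓ : ℝ) := by nlinarith
  set s := Real.sqrt ((4 * (ℓ : ℝ) - α) * ((4 - w) * (ℓ : ℝ))) with hs_def
  set t := Real.sqrt ((4 * (ℓ : ℝ) - a) * ((4 - w) * (ℓ : ℝ))) with ht_def
  have hs2 : s ^ 2 = (4 * (ℓ : ℝ) - α) * ((4 - w) * (ℓ : ℝ)) := sq_sqrt_arg hw4 (le_of_lt hα2)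
  have ht2 : t ^ 2 = (4 * (ℓ : ℝ) - a) * ((4 - w) * (ℓ : ℝ)) := sq_sqrt_arg hw4 ha2
  have hs0 : 0 < s := by
    apply Real.sqrt_pos.2
    have h1 : (0:ℝ) < 4 * (ℓ : ℝ) - α := by linarith
    positivity
  have hs' : s ≠ 0 := ne_of_gt hs0
  have hσ' : σ ≠ 0 := ne_of_gt hσ
  have hdiff : s ^ 2 - t ^ 2 = (4 - w) * (ℓ : ℝ) * (a - α) := by rw [hs2, ht2]; ring
  have h2st : 2 * (s - t) = (s - t) ^ 2 / s + ((4 - w) * (ℓ : ℝ) * (a - α)) / s := by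
    rw [← add_div, eq_div_iff hs']
    linear_combination hdiff
  have hexp : F2 w σ v (ℓ, a) - F2 w σ v (ℓ, α)
      = (s - t) ^ 2 / s + ((4 - w) * (ℓ : ℝ) / s - v + α / σ) * (a - α)
        + (a - α) ^ 2 / (2 * σ) := by
    simp only [F2, G2, tau2, ← hs_def, ← ht_def]
    rw [show (-v * a + (8 * (ℓ:ℝ) - 2 * t + a ^ 2 / (2 * σ)))
        - (-v * α + (8 * (ℓ:ℝ) - 2 * s + α ^ 2 / (2 * σ)))
        = 2 * (s - t) - v * (a - α) + (a ^ 2 - α ^ 2) / (2 * σ) from by ring, h2st]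
    field_simp
    ring
  have hκ' : 0 ≤ ((4 - w) * (ℓ : ℝ) / s - v + α / σ) * (a - α) := by
    rcases hκ with ⟨hb, hv⟩ | hst
    · have hseq : s = (4 - w) * (ℓ : ℝ) := by rw [hs_def, hb, sqrt_at_lw hw4]
      have h1 : (4 - w) * (ℓ : ℝ) / s = 1 := by rw [hseq, div_self (ne_of_gt hc)]
      apply mul_nonneg
      · rw [h1, hb]
        rw [crit] at hv
        linarith
      · rw [hb]; linarith
    · have h0 : (4 - w) * (ℓ : ℝ) / s - v + α / σ = 0 := by
        rw [hfun, ← hs_def] at hst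
        linarith
      rw [h0, zero_mul]
  have hterm : 0 ≤ (s - t) ^ 2 / s := div_nonneg (sq_nonneg _) (le_of_lt hs0)
  nlinarith [hexp]


end basic

section afun
variable {w σ : ℝ}

lemma hfun_lt_hfun (hw4 : w < 4) (hσ : 0 < σ) {ℓ : ℕ} (hl : 1 ≤ ℓ) {a1 a2 : ℝ}
    (h2 : a2 < 4 * (ℓ : ℝ)) (h12 : a1 < a2) :
    hfun w σ ℓ a1 < hfun w σ ℓ a2 := by
  have hl' : (1 : ℝ) ≤ (ℓ : ℝ) := by exact_mod_cast hl
  have hc : (0:ℝ) < (4 - w) * (ℓ : ℝ) := by nlinarith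
  have harg2 : (0:ℝ) < (4 * (ℓ : ℝ) - a2) * ((4 - w) * (ℓ : ℝ)) := by
    apply mul_pos (by linarith) hc
  have harg12 : (4 * (ℓ : ℝ) - a2) * ((4 - w) * (ℓ : ℝ))
      < (4 * (ℓ : ℝ) - a1) * ((4 - w) * (ℓ : ℝ)) := by nlinarith
  have hs2 : 0 < Real.sqrt ((4 * (ℓ : ℝ) - a2) * ((4 - w) * (ℓ : ℝ))) :=
    Real.sqrt_pos.2 harg2
  have hs12 : Real.sqrt ((4 * (ℓ : ℝ) - a2) * ((4 - w) * (ℓ : ℝ)))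
      < Real.sqrt ((4 * (ℓ : ℝ) - a1) * ((4 - w) * (ℓ : ℝ))) :=
    Real.sqrt_lt_sqrt (le_of_lt harg2) harg12
  have hdiv := div_lt_div_of_pos_left hc hs2 hs12
  rw [hfun, hfun]
  have : a1 / σ < a2 / σ := by apply div_lt_div_of_pos_right h12 hσ
  linarith

lemma hfun_contOn (hw4 : w < 4) (hσ : 0 < σ) {ℓ : ℕ} (hl : 1 ≤ ℓ) :
    ContinuousOn (hfun w σ ℓ) (Set.Iio (4 * (ℓ : ℝ))) := by
  have hl' : (1 : ℝ) ≤ (ℓ : ℝ) := by exact_mod_cast hl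
  have hc : (0:ℝ) < (4 - w) * (ℓ : ℝ) := by nlinarith
  apply ContinuousOn.add
  · apply ContinuousOn.div continuousOn_const
    · exact (Real.continuous_sqrt.comp (by continuity)).continuousOn
    · intro a ha
      simp only [Set.mem_Iio] at ha
      have : (0:ℝ) < (4 * (ℓ : ℝ) - a) * ((4 - w) * (ℓ : ℝ)) := mul_pos (by linarith) hc
      exact ne_of_gt (Real.sqrt_pos.2 this)
  · exact (continuous_id.div_const σ).continuousOn

lemma exists_root (hw0 : 0 < w) (hw4 : w < 4) (hσ : 0 < σ) {ℓ : ℕ} (hl : 1 ≤ ℓ) {v : ℝ}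
    (hv : crit w σ ℓ < v) :
    ∃ a, (ℓ : ℝ) * w ≤ a ∧ a < 4 * (ℓ : ℝ) ∧ hfun w σ ℓ a = v := by
  have hl' : (1 : ℝ) ≤ (ℓ : ℝ) := by exact_mod_cast hl
  have hc : (0:ℝ) < (4 - w) * (ℓ : ℝ) := by nlinarith
  have hcrit1 : (1:ℝ) < crit w σ ℓ := by
    rw [crit]
    have : (0:ℝ) < (ℓ:ℝ) * w / σ := by positivity
    linarith
  have hv1 : (1:ℝ) < v := lt_trans hcrit1 hv
  have hv0 : (0:ℝ) < v := by linarith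
  set B := 4 * (ℓ : ℝ) - (4 - w) * (ℓ : ℝ) / v ^ 2 with hB
  have hε1 : (4 - w) * (ℓ : ℝ) / v ^ 2 < (4 - w) * (ℓ : ℝ) := by
    rw [div_lt_iff₀ (by positivity)]
    have h1v : (1:ℝ) < v ^ 2 := by nlinarith
    nlinarith
  have hεpos : (0:ℝ) < (4 - w) * (ℓ : ℝ) / v ^ 2 := by positivity
  have hBlw : (ℓ : ℝ) * w < B := by rw [hB]; nlinarith
  have hB4 : B < 4 * (ℓ : ℝ) := by rw [hB]; linarith
  have hfB : v ≤ hfun w σ ℓ B := by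
    have harg : (4 * (ℓ : ℝ) - B) * ((4 - w) * (ℓ : ℝ)) = ((4 - w) * (ℓ : ℝ) / v) ^ 2 := by
      rw [hB]
      field_simp
      ring
    have hsq : Real.sqrt ((4 * (ℓ : ℝ) - B) * ((4 - w) * (ℓ : ℝ))) = (4 - w) * (ℓ : ℝ) / v := by
      rw [harg, Real.sqrt_sq (by positivity)]
    rw [hfun, hsq]
    have h1 : (4 - w) * (ℓ : ℝ) / ((4 - w) * (ℓ : ℝ) / v) = v := by
      field_simp
      exact div_self (by linarith)
    rw [h1]
    have : (0:ℝ) < B / σ := by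
      apply div_pos _ hσ
      nlinarith
    linarith
  have hflw : hfun w σ ℓ ((ℓ : ℝ) * w) ≤ v := by
    rw [hfun_at_lw hw4 hl]; exact le_of_lt hv
  have hcont : ContinuousOn (hfun w σ ℓ) (Set.Icc ((ℓ : ℝ) * w) B) :=
    (hfun_contOn hw4 hσ hl).mono (by
      intro x hx
      simp only [Set.mem_Icc] at hx
      simp only [Set.mem_Iio]
      linarith [hx.2])
  have := intermediate_value_Icc (le_of_lt hBlw) hcont
  have hvmem : v ∈ Set.Icc (hfun w σ ℓ ((ℓ : ℝ) * w)) (hfun w σ ℓ B) := ⟨hflw, hfB⟩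
  obtain ⟨a, ha, hav⟩ := this hvmem
  exact ⟨a, ha.1, lt_of_le_of_lt ha.2 hB4, hav⟩

-- The unique minimizer of `a ↦ F2 w σ v (ℓ, a)` over `[ℓw, 4ℓ]`.
open Classical in
noncomputable def A (w σ : ℝ) (ℓ : ℕ) (v : ℝ) : ℝ :=
  if v ≤ crit w σ ℓ then (ℓ : ℝ) * w
  else if h : ∃ a, (ℓ : ℝ) * w ≤ a ∧ a < 4 * (ℓ : ℝ) ∧ hfun w σ ℓ a = v then h.choose
  else (ℓ : ℝ) * w

lemma A_zero (v : ℝ) : A w σ 0 v = 0 := by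
  rw [A]
  split_ifs with h1 h2
  · simp
  · exfalso
    obtain ⟨a, ha1, ha2, _⟩ := h2
    simp at ha1 ha2
    linarith
  · simp

lemma A_of_le {ℓ : ℕ} {v : ℝ} (hv : v ≤ crit w σ ℓ) : A w σ ℓ v = (ℓ : ℝ) * w := by
  rw [A, if_pos hv]

lemma A_of_gt (hw0 : 0 < w) (hw4 : w < 4) (hσ : 0 < σ) {ℓ : ℕ} (hl : 1 ≤ ℓ) {v : ℝ}
    (hv : crit w σ ℓ < v) :
    (ℓ : ℝ) * w ≤ A w σ ℓ v ∧ A w σ ℓ v < 4 * (ℓ : ℝ) ∧ hfun w σ ℓ (A w σ ℓ v) = v := by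
  have hex := exists_root hw0 hw4 hσ hl hv
  rw [A, if_neg (not_le.2 hv), dif_pos hex]
  exact hex.choose_spec

lemma A_mem (hw0 : 0 < w) (hw4 : w < 4) (hσ : 0 < σ) {ℓ : ℕ} (hl : 1 ≤ ℓ) (v : ℝ) :
    (ℓ : ℝ) * w ≤ A w σ ℓ v ∧ A w σ ℓ v < 4 * (ℓ : ℝ) := by
  have hl' : (1 : ℝ) ≤ (ℓ : ℝ) := by exact_mod_cast hl
  rcases le_or_gt v (crit w σ ℓ) with hv | hv
  · rw [A_of_le hv]
    exact ⟨le_refl _, by nlinarith⟩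
  · exact ⟨(A_of_gt hw0 hw4 hσ hl hv).1, (A_of_gt hw0 hw4 hσ hl hv).2.1⟩

lemma A_hfun (hw0 : 0 < w) (hw4 : w < 4) (hσ : 0 < σ) {ℓ : ℕ} (hl : 1 ≤ ℓ) (v : ℝ) :
    hfun w σ ℓ (A w σ ℓ v) = max v (crit w σ ℓ) := by
  rcases le_or_gt v (crit w σ ℓ) with hv | hv
  · rw [A_of_le hv, hfun_at_lw hw4 hl, max_eq_right hv]
  · rw [(A_of_gt hw0 hw4 hσ hl hv).2.2, max_eq_left (le_of_lt hv)]

/-- `A` is the minimizer. -/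
lemma A_min (hw0 : 0 < w) (hw4 : w < 4) (hσ : 0 < σ) {ℓ : ℕ} (hl : 1 ≤ ℓ) (v : ℝ)
    {a : ℝ} (ha1 : (ℓ : ℝ) * w ≤ a) (ha2 : a ≤ 4 * (ℓ : ℝ)) :
    F2 w σ v (ℓ, A w σ ℓ v) + (a - A w σ ℓ v) ^ 2 / (2 * σ) ≤ F2 w σ v (ℓ, a) := by
  obtain ⟨hm1, hm2⟩ := A_mem hw0 hw4 hσ hl (σ := σ) v
  apply F2_lower hw4 hσ hl hm1 hm2 ha1 ha2
  rcases le_or_gt v (crit w σ ℓ) with hv | hv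
  · exact Or.inl ⟨A_of_le hv, hv⟩
  · exact Or.inr (A_of_gt hw0 hw4 hσ hl hv).2.2

lemma A_mono (hw0 : 0 < w) (hw4 : w < 4) (hσ : 0 < σ) {ℓ : ℕ} (hl : 1 ≤ ℓ) {v1 v2 : ℝ}
    (h12 : v1 ≤ v2) : A w σ ℓ v1 ≤ A w σ ℓ v2 := by
  rcases le_or_gt v1 (crit w σ ℓ) with hv1 | hv1
  · rw [A_of_le hv1]
    exact (A_mem hw0 hw4 hσ hl v2).1
  · have hv2 : crit w σ ℓ < v2 := lt_of_lt_of_le hv1 h12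
    by_contra hcon
    push_neg at hcon
    have := hfun_lt_hfun hw4 hσ hl (A_mem hw0 hw4 hσ hl v1).2 hcon
    rw [(A_of_gt hw0 hw4 hσ hl hv1).2.2, (A_of_gt hw0 hw4 hσ hl hv2).2.2] at this
    linarith

lemma A_strict_mono (hw0 : 0 < w) (hw4 : w < 4) (hσ : 0 < σ) {ℓ : ℕ} (hl : 1 ≤ ℓ) {v1 v2 : ℝ}
    (h1 : crit w σ ℓ ≤ v1) (h12 : v1 < v2) : A w σ ℓ v1 < A w σ ℓ v2 := by
  have h2 : crit w σ ℓ < v2 := lt_of_le_of_lt h1 h12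
  have hf1 : hfun w σ ℓ (A w σ ℓ v1) = v1 := by
    rw [A_hfun hw0 hw4 hσ hl, max_eq_left h1]
  have hf2 : hfun w σ ℓ (A w σ ℓ v2) = v2 := by
    rw [A_hfun hw0 hw4 hσ hl, max_eq_left (le_of_lt h2)]
  rcases lt_or_ge (A w σ ℓ v1) (A w σ ℓ v2) with h | h
  · exact h
  · exfalso
    rcases eq_or_lt_of_le h with h | h
    · rw [h, hf1] at hf2; linarith
    · have := hfun_lt_hfun hw4 hσ hl (A_mem hw0 hw4 hσ hl v1).2 h
      rw [hf1, hf2] at this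
      linarith

end afun

section cont
variable {w σ : ℝ}

lemma A_continuousAt (hw0 : 0 < w) (hw4 : w < 4) (hσ : 0 < σ) {ℓ : ℕ} (hl : 1 ≤ ℓ) (v0 : ℝ) :
    ContinuousAt (A w σ ℓ) v0 := by
  have hl' : (1 : ℝ) ≤ (ℓ : ℝ) := by exact_mod_cast hl
  rw [Metric.continuousAt_iff]
  intro ε hε
  set a0 := A w σ ℓ v0 with ha0
  obtain ⟨hm1, hm2⟩ := A_mem hw0 hw4 hσ hl (σ := σ) v0
  rw [← ha0] at hm1 hm2
  have hhf0 : hfun w σ ℓ a0 = max v0 (crit w σ ℓ) := by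
    rw [ha0]; exact A_hfun hw0 hw4 hσ hl v0
  -- right bound
  set aP := (a0 + min (a0 + ε) (4 * (ℓ:ℝ))) / 2 with haP
  have haP1 : a0 < aP := by
    have h1 : a0 < min (a0 + ε) (4 * (ℓ:ℝ)) := lt_min (by linarith) hm2
    rw [haP]; linarith
  have haP2 : aP < a0 + ε := by
    have := min_le_left (a0 + ε) (4 * (ℓ:ℝ)); rw [haP]; linarith
  have haP3 : aP < 4 * (ℓ:ℝ) := by
    have := min_le_right (a0 + ε) (4 * (ℓ:ℝ)); rw [haP]; linarith
  have hvP : max v0 (crit w σ ℓ) < hfun w σ ℓ aP := by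
    rw [← hhf0]; exact hfun_lt_hfun hw4 hσ hl haP3 haP1
  set δR := hfun w σ ℓ aP - v0 with hδR
  have hδRpos : 0 < δR := by
    have := le_max_left v0 (crit w σ ℓ); rw [hδR]; linarith
  have hR : ∀ v, v < v0 + δR → A w σ ℓ v < a0 + ε := by
    intro v hv
    rcases le_or_gt v (crit w σ ℓ) with h | h
    · rw [A_of_le h]; linarith
    · by_contra hcon
      push_neg at hcon
      have h2 : aP < A w σ ℓ v := by linarith
      have h3 := hfun_lt_hfun hw4 hσ hl (A_mem hw0 hw4 hσ hl v).2 h2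
      rw [(A_of_gt hw0 hw4 hσ hl h).2.2] at h3
      rw [hδR] at hv
      linarith
  -- left bound
  have hL : ∃ δL > 0, ∀ v, v0 - δL < v → a0 - ε < A w σ ℓ v := by
    rcases lt_or_ge (a0 - ε) ((ℓ:ℝ) * w) with hcase | hcase
    · exact ⟨1, one_pos, fun v _ => lt_of_lt_of_le hcase (A_mem hw0 hw4 hσ hl v).1⟩
    · have ha0lw : (ℓ:ℝ) * w < a0 := by linarith
      have hv0crit : crit w σ ℓ < v0 := by
        by_contra hcc
        push_neg at hcc
        have := A_of_le (σ := σ) hcc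
        rw [← ha0] at this
        linarith
      set aM := max (a0 - ε) ((ℓ:ℝ) * w) with haM
      have haM1 : aM < a0 := max_lt (by linarith) ha0lw
      have haM2 : (ℓ:ℝ) * w ≤ aM := le_max_right _ _
      have hfam : hfun w σ ℓ aM < v0 := by
        have h4 := hfun_lt_hfun hw4 hσ hl hm2 haM1
        rw [hhf0, max_eq_left (le_of_lt hv0crit)] at h4
        exact h4
      refine ⟨v0 - hfun w σ ℓ aM, by linarith, fun v hv => ?_⟩
      have hv' : hfun w σ ℓ aM < v := by linarith
      rcases le_or_gt v (crit w σ ℓ) with h | h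
      · exfalso
        rcases eq_or_lt_of_le haM2 with he | hlt
        · rw [← he, hfun_at_lw hw4 hl] at hv'; linarith
        · have h5 := hfun_lt_hfun hw4 hσ hl (lt_trans haM1 hm2) hlt
          rw [hfun_at_lw hw4 hl] at h5
          linarith
      · by_contra hcon
        push_neg at hcon
        have h6 : A w σ ℓ v ≤ aM := le_trans hcon (le_max_left _ _)
        rcases eq_or_lt_of_le h6 with he | hlt
        · rw [← he, (A_of_gt hw0 hw4 hσ hl h).2.2] at hv'; linarith
        · have h7 := hfun_lt_hfun hw4 hσ hl (lt_trans haM1 hm2) hlt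
          rw [(A_of_gt hw0 hw4 hσ hl h).2.2] at h7
          linarith
  obtain ⟨δL, hδLpos, hLb⟩ := hL
  refine ⟨min δR δL, lt_min hδRpos hδLpos, fun {v} hv => ?_⟩
  rw [Real.dist_eq, abs_lt] at hv ⊢
  constructor
  · have := hLb v (by linarith [min_le_right δR δL, hv.1])
    linarith
  · have := hR v (by linarith [min_le_left δR δL, hv.2])
    linarith

lemma A_continuous (hw0 : 0 < w) (hw4 : w < 4) (hσ : 0 < σ) {ℓ : ℕ} (hl : 1 ≤ ℓ) :
    Continuous (A w σ ℓ) :=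
  continuous_iff_continuousAt.2 (fun v0 => A_continuousAt hw0 hw4 hσ hl v0)

end cont

/-- the value function -/
noncomputable def M (w σ : ℝ) (ℓ : ℕ) (v : ℝ) : ℝ := F2 w σ v (ℓ, A w σ ℓ v)

section valfun
variable {w σ : ℝ}

lemma M_of_le (hw4 : w < 4) {ℓ : ℕ} {v : ℝ} (hv : v ≤ crit w σ ℓ) :
    M w σ ℓ v = -v * ((ℓ:ℝ) * w) + (2 * (ℓ:ℝ) * w + ((ℓ:ℝ) * w) ^ 2 / (2 * σ)) := by
  rw [M, A_of_le hv]
  simp only [F2, G2, tau2, sqrt_at_lw hw4]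
  ring

lemma M_zero' (hw4 : w < 4) (v : ℝ) : M w σ 0 v = 0 := by
  have h : v ≤ crit w σ 0 ∨ ¬ (v ≤ crit w σ 0) := em _
  rw [M, A_zero]
  simp [F2, G2, tau2]

lemma A_feas (hw0 : 0 < w) (hw4 : w < 4) (hσ : 0 < σ) (ℓ : ℕ) (v : ℝ) :
    (ℓ:ℝ) * w ≤ A w σ ℓ v ∧ A w σ ℓ v ≤ 4 * (ℓ:ℝ) := by
  rcases Nat.eq_zero_or_pos ℓ with h | h
  · subst h; rw [A_zero]; simp
  · exact ⟨(A_mem hw0 hw4 hσ h v).1, le_of_lt (A_mem hw0 hw4 hσ h v).2⟩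

lemma F2_shift (v v' : ℝ) (ℓ : ℕ) (a : ℝ) :
    F2 w σ v' (ℓ, a) = F2 w σ v (ℓ, a) - (v' - v) * a := by
  simp only [F2]; ring

/-- `M ℓ` bounds from evaluating at the other point's minimizer. -/
lemma M_pair (hw0 : 0 < w) (hw4 : w < 4) (hσ : 0 < σ) {ℓ : ℕ} (hl : 1 ≤ ℓ) (v v' : ℝ) :
    M w σ ℓ v' ≤ M w σ ℓ v - (v' - v) * A w σ ℓ v := by
  have hfeas := A_feas hw0 hw4 hσ ℓ v
  have h1 := A_min hw0 hw4 hσ hl v' hfeas.1 hfeas.2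
  have h2 : (0:ℝ) ≤ (A w σ ℓ v - A w σ ℓ v') ^ 2 / (2 * σ) := by positivity
  calc M w σ ℓ v' ≤ F2 w σ v' (ℓ, A w σ ℓ v) := by rw [M]; linarith
    _ = M w σ ℓ v - (v' - v) * A w σ ℓ v := by rw [F2_shift v v', M]

lemma M_hasDerivAt (hw0 : 0 < w) (hw4 : w < 4) (hσ : 0 < σ) {ℓ : ℕ} (hl : 1 ≤ ℓ) (v : ℝ) :
    HasDerivAt (M w σ ℓ) (-(A w σ ℓ v)) v := by
  rw [hasDerivAt_iff_tendsto_slope]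
  have hbound : ∀ v', v' ≠ v → ‖slope (M w σ ℓ) v v' - (-(A w σ ℓ v))‖
      ≤ |A w σ ℓ v' - A w σ ℓ v| := by
    intro v' hne
    have hub := M_pair hw0 hw4 hσ hl v v'
    have hlb := M_pair hw0 hw4 hσ hl v' v
    -- num := M v' − M v + (v'−v) A v ∈ [−|v'−v||A v' − A v|, 0]
    have hnum1 : M w σ ℓ v' - M w σ ℓ v + (v' - v) * A w σ ℓ v ≤ 0 := by linarith
    have hnum2 : -(|v' - v| * |A w σ ℓ v' - A w σ ℓ v|)
        ≤ M w σ ℓ v' - M w σ ℓ v + (v' - v) * A w σ ℓ v := by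
      have h3 : M w σ ℓ v' - M w σ ℓ v + (v' - v) * A w σ ℓ v
          ≥ (v' - v) * (A w σ ℓ v - A w σ ℓ v') := by linarith
      rcases le_or_gt v v' with h | h
      · have hA : A w σ ℓ v ≤ A w σ ℓ v' := A_mono hw0 hw4 hσ hl h
        rw [abs_of_nonneg (by linarith : (0:ℝ) ≤ v' - v),
          abs_of_nonneg (by linarith : (0:ℝ) ≤ A w σ ℓ v' - A w σ ℓ v)]
        nlinarith
      · have hA : A w σ ℓ v' ≤ A w σ ℓ v := A_mono hw0 hw4 hσ hl (le_of_lt h)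
        rw [abs_of_nonpos (by linarith : v' - v ≤ 0),
          abs_of_nonpos (by linarith : A w σ ℓ v' - A w σ ℓ v ≤ 0)]
        nlinarith
    have hvne : v' - v ≠ 0 := sub_ne_zero.2 hne
    have heq : slope (M w σ ℓ) v v' - (-(A w σ ℓ v))
        = (M w σ ℓ v' - M w σ ℓ v + (v' - v) * A w σ ℓ v) / (v' - v) := by
      rw [slope_def_field]
      field_simp
      ring
    rw [Real.norm_eq_abs, heq, abs_div]
    rw [div_le_iff₀ (abs_pos.2 hvne)]
    apply abs_le.2
    constructor
    · calc -(|A w σ ℓ v' - A w σ ℓ v| * |v' - v|)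
          = -(|v' - v| * |A w σ ℓ v' - A w σ ℓ v|) := by ring
        _ ≤ _ := hnum2
    · calc M w σ ℓ v' - M w σ ℓ v + (v' - v) * A w σ ℓ v ≤ 0 := hnum1
        _ ≤ |A w σ ℓ v' - A w σ ℓ v| * |v' - v| := by positivity
  have hAc : Filter.Tendsto (fun v' => |A w σ ℓ v' - A w σ ℓ v|) (nhdsWithin v {v}ᶜ) (nhds 0) := by
    have h1 : ContinuousAt (fun v' => |A w σ ℓ v' - A w σ ℓ v|) v :=
      ((A_continuousAt hw0 hw4 hσ hl v).sub continuousAt_const).abs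
    have h2 := h1.tendsto
    simp only [sub_self, abs_zero] at h2
    exact h2.mono_left nhdsWithin_le_nhds
  have hsq : Filter.Tendsto (fun v' => slope (M w σ ℓ) v v' - (-(A w σ ℓ v)))
      (nhdsWithin v {v}ᶜ) (nhds 0) := by
    apply squeeze_zero_norm' _ hAc
    filter_upwards [self_mem_nhdsWithin] with v' hv'
    exact hbound v' hv'
  exact tendsto_sub_nhds_zero_iff.mp hsq

end valfun

section cross
variable {w σ : ℝ}

/-- For all `x` in the zero-extended sense: `HasDerivAt` also at level 0. -/
lemma M_hasDerivAt' (hw0 : 0 < w) (hw4 : w < 4) (hσ : 0 < σ) (ℓ : ℕ) (v : ℝ) :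
    HasDerivAt (M w σ ℓ) (-(A w σ ℓ v)) v := by
  rcases Nat.eq_zero_or_pos ℓ with h | h
  · subst h
    rw [A_zero, neg_zero]
    have : M w σ 0 = fun _ : ℝ => (0:ℝ) := funext (fun v => M_zero' hw4 v)
    rw [this]
    exact hasDerivAt_const v 0
  · exact M_hasDerivAt hw0 hw4 hσ h v

/-- Strict ordering of the per-layer minimizers in the number of layers. -/
lemma A_lt_A (hw0 : 0 < w) (hw4 : w < 4) (hσ : 0 < σ) {ℓ ℓ' : ℕ} (hll : ℓ < ℓ') (v : ℝ) :
    A w σ ℓ v < A w σ ℓ' v := by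
  have hl' : 1 ≤ ℓ' := Nat.one_le_iff_ne_zero.2 (by omega)
  have hll' : (ℓ : ℝ) < (ℓ' : ℝ) := by exact_mod_cast hll
  have hc1 : (1:ℝ) ≤ (ℓ' : ℝ) := by exact_mod_cast hl'
  rcases Nat.eq_zero_or_pos ℓ with h0 | h0
  · subst h0
    rw [A_zero]
    calc (0:ℝ) < (ℓ' : ℝ) * w := by positivity
      _ ≤ A w σ ℓ' v := (A_mem hw0 hw4 hσ hl' v).1
  · have hcl : (1:ℝ) ≤ (ℓ : ℝ) := by exact_mod_cast h0
    set a' := A w σ ℓ' v with ha'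
    obtain ⟨hm1', hm2'⟩ := A_mem hw0 hw4 hσ hl' (σ := σ) v
    rw [← ha'] at hm1' hm2'
    have ha'pos : 0 < a' := lt_of_lt_of_le (by positivity) hm1'
    rcases lt_or_ge a' (4 * (ℓ:ℝ)) with h4 | h4
    · -- interior comparison
      have hlwa : (ℓ:ℝ) * w < a' := by
        calc (ℓ:ℝ) * w < (ℓ':ℝ) * w := by nlinarith
          _ ≤ a' := hm1'
      -- key: hfun ℓ a' > hfun ℓ' a'
      have hkey : hfun w σ ℓ' a' < hfun w σ ℓ a' := by
        rw [hfun, hfun]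
        have harg1 : (0:ℝ) < (4 * (ℓ:ℝ) - a') * ((4 - w) * (ℓ:ℝ)) := by
          apply mul_pos (by linarith) (by nlinarith)
        have harg2 : (0:ℝ) < (4 * (ℓ':ℝ) - a') * ((4 - w) * (ℓ':ℝ)) := by
          apply mul_pos (by linarith) (by nlinarith)
        have hX : 0 < Real.sqrt ((4 * (ℓ:ℝ) - a') * ((4 - w) * (ℓ:ℝ))) := Real.sqrt_pos.2 harg1
        have hY : 0 < Real.sqrt ((4 * (ℓ':ℝ) - a') * ((4 - w) * (ℓ':ℝ))) := Real.sqrt_pos.2 harg2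
        have hQ : ((4 - w) * (ℓ':ℝ) / Real.sqrt ((4 * (ℓ':ℝ) - a') * ((4 - w) * (ℓ':ℝ)))) ^ 2
            < ((4 - w) * (ℓ:ℝ) / Real.sqrt ((4 * (ℓ:ℝ) - a') * ((4 - w) * (ℓ:ℝ)))) ^ 2 := by
          rw [div_pow, div_pow, sq_sqrt_arg hw4 (le_of_lt h4), sq_sqrt_arg hw4 (le_of_lt hm2')]
          rw [div_lt_div_iff₀ harg2 harg1]
          have hcpos : (0:ℝ) < 4 - w := by linarith
          have hbase : (ℓ':ℝ) * (4 * (ℓ:ℝ) - a') < (ℓ:ℝ) * (4 * (ℓ':ℝ) - a') := by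
            nlinarith [mul_lt_mul_of_pos_left hll' ha'pos]
          have hpos3 : (0:ℝ) < (4 - w) ^ 3 * (ℓ:ℝ) * (ℓ':ℝ) := by positivity
          nlinarith [mul_lt_mul_of_pos_right hbase hpos3]
        have hterm : (4 - w) * (ℓ':ℝ) / Real.sqrt ((4 * (ℓ':ℝ) - a') * ((4 - w) * (ℓ':ℝ)))
            < (4 - w) * (ℓ:ℝ) / Real.sqrt ((4 * (ℓ:ℝ) - a') * ((4 - w) * (ℓ:ℝ))) := by
          have hpos1 : 0 ≤ (4 - w) * (ℓ:ℝ) / Real.sqrt ((4 * (ℓ:ℝ) - a') * ((4 - w) * (ℓ:ℝ))) := by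
            apply div_nonneg (by nlinarith) (le_of_lt hX)
          by_contra hcc
          push_neg at hcc
          have h2 := pow_le_pow_left₀ hpos1 hcc 2
          linarith
        linarith
      -- hfun ℓ (A ℓ v) = max v critℓ < hfun ℓ a'
      have hfa : hfun w σ ℓ (A w σ ℓ v) < hfun w σ ℓ a' := by
        rw [A_hfun hw0 hw4 hσ h0 v]
        have h1 : v ≤ hfun w σ ℓ' a' := by
          rw [(ha' ▸ A_hfun hw0 hw4 hσ hl' v : hfun w σ ℓ' a' = max v (crit w σ ℓ'))]
          exact le_max_left _ _
        have h2 : crit w σ ℓ < hfun w σ ℓ a' := by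
          rw [← hfun_at_lw hw4 h0]
          exact hfun_lt_hfun hw4 hσ h0 h4 hlwa
        apply max_lt (lt_of_le_of_lt h1 hkey) h2
      by_contra hcon
      push_neg at hcon
      rcases eq_or_lt_of_le hcon with he | hlt
      · rw [he] at hfa; linarith
      · have := hfun_lt_hfun hw4 hσ h0 (A_mem hw0 hw4 hσ h0 v).2 hlt
        linarith
    · exact lt_of_lt_of_le (A_mem hw0 hw4 hσ h0 v).2 h4

end cross

/-- consecutive difference of the value functions -/
noncomputable def DD (w σ : ℝ) (k : ℕ) (v : ℝ) : ℝ := M w σ (k + 1) v - M w σ k v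

section dd
variable {w σ : ℝ}

lemma DD_hasDerivAt (hw0 : 0 < w) (hw4 : w < 4) (hσ : 0 < σ) (k : ℕ) (v : ℝ) :
    HasDerivAt (DD w σ k) (A w σ k v - A w σ (k+1) v) v := by
  have h1 := M_hasDerivAt' hw0 hw4 hσ (k+1) v
  have h2 := M_hasDerivAt' hw0 hw4 hσ k v
  have h3 := h1.sub h2
  have : -(A w σ (k+1) v) - -(A w σ k v) = A w σ k v - A w σ (k+1) v := by ring
  rw [this] at h3
  exact h3

lemma DD_strictAnti (hw0 : 0 < w) (hw4 : w < 4) (hσ : 0 < σ) (k : ℕ) :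
    StrictAnti (DD w σ k) := by
  apply strictAnti_of_deriv_neg
  intro v
  rw [(DD_hasDerivAt hw0 hw4 hσ k v).deriv]
  have := A_lt_A hw0 hw4 hσ (Nat.lt_succ_self k) v
  linarith

lemma DD_continuous (hw0 : 0 < w) (hw4 : w < 4) (hσ : 0 < σ) (k : ℕ) :
    Continuous (DD w σ k) :=
  continuous_iff_continuousAt.2 fun v =>
    (DD_hasDerivAt hw0 hw4 hσ k v).differentiableAt.continuousAt

lemma DD_at_zero (hw0 : 0 < w) (hw4 : w < 4) (hσ : 0 < σ) (k : ℕ) : 0 < DD w σ k 0 := by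
  have hc0 : (0:ℝ) ≤ crit w σ k := by
    rw [crit]; positivity
  have hc1 : (0:ℝ) ≤ crit w σ (k+1) := by
    rw [crit]; positivity
  have h2 : (0:ℝ) < 2 * σ := by linarith
  rw [DD, M_of_le hw4 hc1, M_of_le hw4 hc0]
  push_cast
  have hd : 0 ≤ (((k:ℝ)+1) * w) ^ 2 / (2*σ) - ((k:ℝ) * w) ^ 2 / (2*σ) := by
    rw [div_sub_div_same]
    apply div_nonneg _ (le_of_lt h2)
    have hk : (0:ℝ) ≤ (k:ℝ) := Nat.cast_nonneg k
    nlinarith [sq_nonneg w]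
  have hk : (0:ℝ) ≤ (k:ℝ) := Nat.cast_nonneg k
  nlinarith [hd]

lemma tau2_nonneg (hw0 : 0 < w) (hw4 : w < 4) {ℓ : ℕ} {a : ℝ}
    (ha1 : (ℓ:ℝ) * w ≤ a) (ha2 : a ≤ 4 * (ℓ:ℝ)) : 2 * (ℓ:ℝ) * w ≤ tau2 w ℓ a := by
  have hl0 : (0:ℝ) ≤ (ℓ:ℝ) := Nat.cast_nonneg ℓ
  have hsq : Real.sqrt ((4 * (ℓ:ℝ) - a) * ((4 - w) * (ℓ:ℝ))) ≤ (4 - w) * (ℓ:ℝ) := by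
    have h1 : (4 * (ℓ:ℝ) - a) * ((4 - w) * (ℓ:ℝ)) ≤ ((4 - w) * (ℓ:ℝ)) ^ 2 := by nlinarith
    calc Real.sqrt ((4 * (ℓ:ℝ) - a) * ((4 - w) * (ℓ:ℝ)))
        ≤ Real.sqrt (((4 - w) * (ℓ:ℝ)) ^ 2) := Real.sqrt_le_sqrt h1
      _ = (4 - w) * (ℓ:ℝ) := Real.sqrt_sq (by nlinarith)
  rw [tau2]
  nlinarith

lemma DD_neg_far (hw0 : 0 < w) (hw4 : w < 4) (hσ : 0 < σ) (k : ℕ) {v : ℝ}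
    (hv : 2 * ((k:ℝ)+1) + 4 * (((k:ℝ)+1) ^ 2 / σ) + 1 ≤ v) : DD w σ k v < 0 := by
  have hk0 : (0:ℝ) ≤ (k:ℝ) := Nat.cast_nonneg k
  have hv0 : 0 < v := by
    have : (0:ℝ) < 2 * ((k:ℝ)+1) + 4 * (((k:ℝ)+1) ^ 2 / σ) + 1 := by positivity
    linarith
  -- upper bound for M (k+1) v
  have hub : M w σ (k+1) v ≤ -v * (4 * ((k:ℝ)+1)) + 8 * ((k:ℝ)+1) + (4 * ((k:ℝ)+1)) ^ 2 / (2 * σ) := by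
    have hfeas1 : ((k+1:ℕ):ℝ) * w ≤ 4 * ((k+1:ℕ):ℝ) := by push_cast; nlinarith
    have h := A_min hw0 hw4 hσ (Nat.le_add_left 1 k) v hfeas1 (le_refl _)
    have hsq : (0:ℝ) ≤ (4 * ((k+1:ℕ):ℝ) - A w σ (k+1) v) ^ 2 / (2 * σ) := by positivity
    have hF : F2 w σ v ((k+1 : ℕ), 4 * ((k+1:ℕ):ℝ))
        = -v * (4 * ((k:ℝ)+1)) + 8 * ((k:ℝ)+1) + (4 * ((k:ℝ)+1)) ^ 2 / (2 * σ) := by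
      simp only [F2, G2, tau2]
      rw [show (4 * (((k+1:ℕ)):ℝ) - 4 * ((k+1:ℕ):ℝ)) * ((4 - w) * ((k+1:ℕ):ℝ)) = 0 by ring,
        Real.sqrt_zero]
      push_cast
      ring
    rw [M]
    rw [hF] at h
    linarith
  -- lower bound for M k v
  have hlb : -v * (4 * (k:ℝ)) ≤ M w σ k v := by
    have hfeas := A_feas hw0 hw4 hσ k v
    have htau := tau2_nonneg hw0 hw4 hfeas.1 hfeas.2
    have hA0 : 0 ≤ A w σ k v := le_trans (by positivity) hfeas.1
    have hsq : (0:ℝ) ≤ (A w σ k v) ^ 2 / (2 * σ) := by positivity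
    have hlin : -v * (4 * (k:ℝ)) ≤ -v * A w σ k v := by nlinarith
    rw [M]
    simp only [F2, G2]
    nlinarith
  rw [DD]
  have hq : (4 * ((k:ℝ)+1)) ^ 2 / (2 * σ) = 8 * (((k:ℝ)+1) ^ 2 / σ) := by
    field_simp
    ring
  rw [hq] at hub
  have hQ0 : 0 ≤ ((k:ℝ)+1)^2/σ := by positivity
  linarith

-- the critical slope: unique zero of `DD k`.
open Classical in
noncomputable def zz (w σ : ℝ) (k : ℕ) : ℝ :=
  if h : ∃ v, 0 < v ∧ DD w σ k v = 0 then h.choose else 0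

lemma zz_spec (hw0 : 0 < w) (hw4 : w < 4) (hσ : 0 < σ) (k : ℕ) :
    0 < zz w σ k ∧ DD w σ k (zz w σ k) = 0 := by
  have hV : 0 < 2 * ((k:ℝ)+1) + 4 * (((k:ℝ)+1) ^ 2 / σ) + 1 := by positivity
  have hex : ∃ v, 0 < v ∧ DD w σ k v = 0 := by
    have hc := (DD_continuous hw0 hw4 hσ k).continuousOn
      (s := Set.Icc 0 (2 * ((k:ℝ)+1) + 4 * (((k:ℝ)+1) ^ 2 / σ) + 1))
    have h0 := DD_at_zero hw0 hw4 hσ k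
    have hF := DD_neg_far hw0 hw4 hσ k (le_refl _)
    have hmem : (0:ℝ) ∈ Set.Icc (DD w σ k (2 * ((k:ℝ)+1) + 4 * (((k:ℝ)+1) ^ 2 / σ) + 1))
        (DD w σ k 0) := ⟨le_of_lt hF, le_of_lt h0⟩
    obtain ⟨v, hvmem, hveq⟩ := intermediate_value_Icc' (le_of_lt hV) hc hmem
    refine ⟨v, ?_, hveq⟩
    rcases eq_or_lt_of_le hvmem.1 with he | hlt
    · exfalso; rw [← he] at hveq; linarith
    · exact hlt
  rw [zz, dif_pos hex]
  exact ⟨hex.choose_spec.1, hex.choose_spec.2⟩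

lemma DD_pos_of_lt (hw0 : 0 < w) (hw4 : w < 4) (hσ : 0 < σ) {k : ℕ} {v : ℝ}
    (hv : v < zz w σ k) : 0 < DD w σ k v := by
  have := (DD_strictAnti hw0 hw4 hσ k) hv
  rw [(zz_spec hw0 hw4 hσ k).2] at this
  linarith

lemma DD_neg_of_gt (hw0 : 0 < w) (hw4 : w < 4) (hσ : 0 < σ) {k : ℕ} {v : ℝ}
    (hv : zz w σ k < v) : DD w σ k v < 0 := by
  have := (DD_strictAnti hw0 hw4 hσ k) hv
  rw [(zz_spec hw0 hw4 hσ k).2] at this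
  linarith

lemma lt_zz_of_DD_pos (hw0 : 0 < w) (hw4 : w < 4) (hσ : 0 < σ) {k : ℕ} {v : ℝ}
    (h : 0 < DD w σ k v) : v < zz w σ k := by
  by_contra hc
  push_neg at hc
  rcases eq_or_lt_of_le hc with he | hlt
  · rw [← he, (zz_spec hw0 hw4 hσ k).2] at h
    linarith
  · linarith [DD_neg_of_gt hw0 hw4 hσ hlt]

end dd

section conv
variable {w σ : ℝ}

/-- Cauchy–Schwarz for square roots: `√(x₁y₁) + √(x₂y₂) ≤ √((x₁+x₂)(y₁+y₂))`. -/
lemma sqrt_cs {x1 y1 x2 y2 : ℝ} (hx1 : 0 ≤ x1) (hy1 : 0 ≤ y1) (hx2 : 0 ≤ x2) (hy2 : 0 ≤ y2) :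
    Real.sqrt (y1 * x1) + Real.sqrt (y2 * x2) ≤ Real.sqrt ((y1 + y2) * (x1 + x2)) := by
  have h1 : Real.sqrt (y1 * x1) * Real.sqrt (y2 * x2) = Real.sqrt ((x1 * y2) * (x2 * y1)) := by
    rw [← Real.sqrt_mul (by positivity)]
    ring_nf
  have h2 : Real.sqrt ((x1 * y2) * (x2 * y1)) ≤ (x1 * y2 + x2 * y1) / 2 := by
    have h3 : (x1 * y2) * (x2 * y1) ≤ ((x1 * y2 + x2 * y1) / 2) ^ 2 := by
      nlinarith [sq_nonneg (x1 * y2 - x2 * y1)]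
    calc Real.sqrt ((x1 * y2) * (x2 * y1)) ≤ Real.sqrt (((x1 * y2 + x2 * y1) / 2) ^ 2) :=
          Real.sqrt_le_sqrt h3
      _ = (x1 * y2 + x2 * y1) / 2 := Real.sqrt_sq (by positivity)
  have hs1 : (Real.sqrt (y1 * x1)) ^ 2 = y1 * x1 := Real.sq_sqrt (by positivity)
  have hs2 : (Real.sqrt (y2 * x2)) ^ 2 = y2 * x2 := Real.sq_sqrt (by positivity)
  have hsum : (Real.sqrt (y1 * x1) + Real.sqrt (y2 * x2)) ^ 2 ≤ (y1 + y2) * (x1 + x2) := by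
    have hexp : (Real.sqrt (y1 * x1) + Real.sqrt (y2 * x2)) ^ 2
        = y1 * x1 + y2 * x2 + 2 * (Real.sqrt (y1 * x1) * Real.sqrt (y2 * x2)) := by
      rw [add_sq, hs1, hs2]; ring
    rw [hexp, h1]
    nlinarith [h2]
  calc Real.sqrt (y1 * x1) + Real.sqrt (y2 * x2)
      = Real.sqrt ((Real.sqrt (y1 * x1) + Real.sqrt (y2 * x2)) ^ 2) :=
        (Real.sqrt_sq (by positivity)).symm
    _ ≤ Real.sqrt ((y1 + y2) * (x1 + x2)) := Real.sqrt_le_sqrt hsum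

/-- Strict midpoint convexity across layers `k, k+1, k+2`. -/
lemma midpoint_conv (hw0 : 0 < w) (hw4 : w < 4) (hσ : 0 < σ) (k : ℕ) (v : ℝ) {a1 a2 : ℝ}
    (h1a : (k:ℝ) * w ≤ a1) (h1b : a1 ≤ 4 * (k:ℝ))
    (h2a : ((k:ℝ) + 2) * w ≤ a2) (h2b : a2 ≤ 4 * ((k:ℝ) + 2)) (h12 : a1 < a2) :
    F2 w σ v (k + 1, (a1 + a2) / 2)
      < (F2 w σ v (k, a1) + F2 w σ v (k + 2, a2)) / 2 := by
  have hk0 : (0:ℝ) ≤ (k:ℝ) := Nat.cast_nonneg k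
  have hc : (0:ℝ) < 4 - w := by linarith
  -- Cauchy–Schwarz part
  have hcs := sqrt_cs (x1 := (4 - w) * (k:ℝ)) (y1 := 4 * (k:ℝ) - a1)
    (x2 := (4 - w) * ((k:ℝ) + 2)) (y2 := 4 * ((k:ℝ) + 2) - a2)
    (by positivity) (by linarith) (by positivity) (by linarith)
  have hmidarg' : (4 * ((k:ℝ) + 1) - (a1 + a2) / 2) * ((4 - w) * ((k:ℝ) + 1))
      = ((4 * (k:ℝ) - a1 + (4 * ((k:ℝ) + 2) - a2)) * ((4 - w) * (k:ℝ) + (4 - w) * ((k:ℝ) + 2))) / 4 := by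
    ring
  have hmid : Real.sqrt ((4 * ((k:ℝ) + 1) - (a1 + a2) / 2) * ((4 - w) * ((k:ℝ) + 1)))
      = Real.sqrt ((4 * (k:ℝ) - a1 + (4 * ((k:ℝ) + 2) - a2)) * ((4 - w) * (k:ℝ) + (4 - w) * ((k:ℝ) + 2))) / 2 := by
    rw [hmidarg', show ((4 * (k:ℝ) - a1 + (4 * ((k:ℝ) + 2) - a2)) * ((4 - w) * (k:ℝ) + (4 - w) * ((k:ℝ) + 2))) / 4
      = ((4 * (k:ℝ) - a1 + (4 * ((k:ℝ) + 2) - a2)) * ((4 - w) * (k:ℝ) + (4 - w) * ((k:ℝ) + 2))) * (1/2)^2 by ring,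
      Real.sqrt_mul' _ (by positivity), Real.sqrt_sq (by norm_num)]
    ring
  -- quadratic part strict
  have hne : (0:ℝ) < (a1 - a2) ^ 2 :=
    lt_of_le_of_ne (sq_nonneg _) (Ne.symm (pow_ne_zero 2 (sub_ne_zero.2 (ne_of_lt h12))))
  have hquad : ((a1 + a2) / 2) ^ 2 / (2 * σ) < (a1 ^ 2 / (2 * σ) + a2 ^ 2 / (2 * σ)) / 2 := by
    rw [← add_div, div_div]
    rw [div_lt_div_iff₀ (by linarith) (by linarith)]
    nlinarith [mul_pos hσ hne]
  -- assemble
  simp only [F2, G2, tau2]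
  push_cast
  linarith [hcs, hmid, hquad]

lemma DD_lt_DD (hw0 : 0 < w) (hw4 : w < 4) (hσ : 0 < σ) (k : ℕ) (v : ℝ) :
    DD w σ k v < DD w σ (k + 1) v := by
  have hfe1 := A_feas hw0 hw4 hσ k v
  have hfe2 := A_feas hw0 hw4 hσ (k + 2) v
  have h12 : A w σ k v < A w σ (k + 2) v := A_lt_A hw0 hw4 hσ (by omega) v
  have e2 : (((k + 2 : ℕ)) : ℝ) = (k:ℝ) + 2 := by push_cast; ring
  rw [e2] at hfe2
  have hmc := midpoint_conv hw0 hw4 hσ k v hfe1.1 hfe1.2 hfe2.1 hfe2.2 h12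
  have hm1 : (((k + 1 : ℕ)) : ℝ) * w ≤ (A w σ k v + A w σ (k + 2) v) / 2 := by
    push_cast
    linarith [hfe1.1, hfe2.1]
  have hm2 : (A w σ k v + A w σ (k + 2) v) / 2 ≤ 4 * (((k + 1 : ℕ)) : ℝ) := by
    push_cast
    linarith [hfe1.2, hfe2.2]
  have hMle : M w σ (k + 1) v ≤ F2 w σ v (k + 1, (A w σ k v + A w σ (k + 2) v) / 2) := by
    have h := A_min hw0 hw4 hσ (Nat.le_add_left 1 k) v hm1 hm2
    have hsq : (0:ℝ) ≤ ((A w σ k v + A w σ (k + 2) v) / 2 - A w σ (k + 1) v) ^ 2 / (2 * σ) := by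
      positivity
    rw [M]
    linarith
  have hid1 : F2 w σ v (k, A w σ k v) = M w σ k v := rfl
  have hid2 : F2 w σ v (k + 2, A w σ (k + 2) v) = M w σ (k + 2) v := rfl
  rw [DD, DD]
  rw [hid1, hid2] at hmc
  linarith

end conv

section chain
variable {w σ : ℝ}

lemma DD_mono_idx (hw0 : 0 < w) (hw4 : w < 4) (hσ : 0 < σ) (v : ℝ) :
    ∀ {i j : ℕ}, i ≤ j → DD w σ i v ≤ DD w σ j v := by
  intro i j hij
  induction j, hij using Nat.le_induction with
  | base => exact le_refl _
  | succ n hn ih => exact le_trans ih (le_of_lt (DD_lt_DD hw0 hw4 hσ n v))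

lemma zz_lt_zz (hw0 : 0 < w) (hw4 : w < 4) (hσ : 0 < σ) (k : ℕ) :
    zz w σ k < zz w σ (k + 1) := by
  apply lt_zz_of_DD_pos hw0 hw4 hσ
  calc (0:ℝ) = DD w σ k (zz w σ k) := ((zz_spec hw0 hw4 hσ k).2).symm
    _ < DD w σ (k+1) (zz w σ k) := DD_lt_DD hw0 hw4 hσ k _

lemma crit_mono (hw0 : 0 < w) (hσ : 0 < σ) {k j : ℕ} (hkj : k ≤ j) :
    crit w σ k ≤ crit w σ j := by
  rw [crit, crit]
  have : (k:ℝ) ≤ (j:ℝ) := by exact_mod_cast hkj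
  have h1 : (k:ℝ) * w / σ ≤ (j:ℝ) * w / σ := by
    have h2 : (k:ℝ) * w ≤ (j:ℝ) * w := by nlinarith
    exact (div_le_div_iff_of_pos_right hσ).2 h2
  linarith

lemma DD_at_crit (hw0 : 0 < w) (hw4 : w < 4) (hσ : 0 < σ) (k : ℕ) :
    DD w σ k (crit w σ k) = w + w ^ 2 / (2 * σ) := by
  have hc1 : crit w σ k ≤ crit w σ (k + 1) := crit_mono hw0 hσ (Nat.le_succ k)
  rw [DD, M_of_le hw4 hc1, M_of_le hw4 (le_refl _), crit]
  push_cast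
  field_simp
  ring

lemma zz_gt_crit (hw0 : 0 < w) (hw4 : w < 4) (hσ : 0 < σ) (k : ℕ) :
    crit w σ k < zz w σ k := by
  apply lt_zz_of_DD_pos hw0 hw4 hσ
  rw [DD_at_crit hw0 hw4 hσ k]
  positivity

lemma M_down (hw0 : 0 < w) (hw4 : w < 4) (hσ : 0 < σ) {v : ℝ} :
    ∀ (d i : ℕ), DD w σ (i + d) v < 0 → M w σ (i + d + 1) v < M w σ i v := by
  intro d
  induction d with
  | zero =>
    intro i h
    have : DD w σ i v < 0 := by simpa using h
    rw [DD] at this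
    simpa using by linarith [this]
  | succ d ih =>
    intro i h
    have h1 : DD w σ ((i + 1) + d) v < 0 := by
      have : (i + 1) + d = i + (d + 1) := by omega
      rw [this]; exact h
    have h2 := ih (i + 1) h1
    have h3 : DD w σ i v < 0 := by
      calc DD w σ i v ≤ DD w σ (i + (d + 1)) v := DD_mono_idx hw0 hw4 hσ v (by omega)
        _ < 0 := h
    rw [DD] at h3
    have heq : (i + 1) + d + 1 = i + (d + 1) + 1 := by omega
    rw [heq] at h2
    linarith

lemma M_down_le (hw0 : 0 < w) (hw4 : w < 4) (hσ : 0 < σ) {v : ℝ} :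
    ∀ (d i : ℕ), DD w σ (i + d) v ≤ 0 → M w σ (i + d + 1) v ≤ M w σ i v := by
  intro d
  induction d with
  | zero =>
    intro i h
    have : DD w σ i v ≤ 0 := by simpa using h
    rw [DD] at this
    simpa using by linarith [this]
  | succ d ih =>
    intro i h
    have h1 : DD w σ ((i + 1) + d) v ≤ 0 := by
      have : (i + 1) + d = i + (d + 1) := by omega
      rw [this]; exact h
    have h2 := ih (i + 1) h1
    have h3 : DD w σ i v ≤ 0 := by
      calc DD w σ i v ≤ DD w σ (i + (d + 1)) v := DD_mono_idx hw0 hw4 hσ v (by omega)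
        _ ≤ 0 := h
    rw [DD] at h3
    have heq : (i + 1) + d + 1 = i + (d + 1) + 1 := by omega
    rw [heq] at h2
    linarith

lemma M_up (hw0 : 0 < w) (hw4 : w < 4) (hσ : 0 < σ) {v : ℝ} {i : ℕ}
    (h : 0 < DD w σ i v) : ∀ d : ℕ, M w σ i v < M w σ (i + d + 1) v := by
  intro d
  induction d with
  | zero =>
    rw [DD] at h
    simpa using by linarith [h]
  | succ d ih =>
    have h1 : 0 < DD w σ (i + d + 1) v :=
      lt_of_lt_of_le h (DD_mono_idx hw0 hw4 hσ v (by omega))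
    rw [DD] at h1
    have : i + (d + 1) + 1 = (i + d + 1) + 1 := by omega
    rw [this]
    linarith

lemma M_up_le (hw0 : 0 < w) (hw4 : w < 4) (hσ : 0 < σ) {v : ℝ} {i : ℕ}
    (h : 0 ≤ DD w σ i v) : ∀ d : ℕ, M w σ i v ≤ M w σ (i + d + 1) v := by
  intro d
  induction d with
  | zero =>
    rw [DD] at h
    simpa using by linarith [h]
  | succ d ih =>
    have h1 : 0 ≤ DD w σ (i + d + 1) v :=
      le_trans h (DD_mono_idx hw0 hw4 hσ v (by omega))
    rw [DD] at h1
    have : i + (d + 1) + 1 = (i + d + 1) + 1 := by omega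
    rw [this]
    linarith

lemma M_glob_strict (hw0 : 0 < w) (hw4 : w < 4) (hσ : 0 < σ) {v : ℝ} {k : ℕ}
    (h1 : DD w σ k v < 0) (h2 : 0 < DD w σ (k + 1) v) :
    ∀ j : ℕ, j ≠ k + 1 → M w σ (k + 1) v < M w σ j v := by
  intro j hj
  rcases lt_or_gt_of_ne hj with hlt | hgt
  · have hd : j + (k - j) = k := by omega
    have := M_down hw0 hw4 hσ (k - j) j (by rw [hd]; exact h1)
    rw [show j + (k - j) + 1 = k + 1 by omega] at this
    exact this
  · have := M_up hw0 hw4 hσ h2 (j - (k + 1) - 1)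
    rw [show (k + 1) + (j - (k + 1) - 1) + 1 = j by omega] at this
    exact this

lemma M_glob_le (hw0 : 0 < w) (hw4 : w < 4) (hσ : 0 < σ) {v : ℝ} {k : ℕ}
    (h1 : DD w σ k v ≤ 0) (h2 : 0 ≤ DD w σ (k + 1) v) :
    ∀ j : ℕ, M w σ (k + 1) v ≤ M w σ j v := by
  intro j
  rcases lt_trichotomy j (k + 1) with hlt | heq | hgt
  · have hd : j + (k - j) = k := by omega
    have := M_down_le hw0 hw4 hσ (k - j) j (by rw [hd]; exact h1)
    rw [show j + (k - j) + 1 = k + 1 by omega] at this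
    exact this
  · rw [heq]
  · have := M_up_le hw0 hw4 hσ h2 (j - (k + 1) - 1)
    rw [show (k + 1) + (j - (k + 1) - 1) + 1 = j by omega] at this
    exact this

lemma F2_at_zero (v : ℝ) : F2 w σ v (0, 0) = 0 := by
  simp [F2, G2, tau2]

lemma F2_ge_M (hw0 : 0 < w) (hw4 : w < 4) (hσ : 0 < σ) (v : ℝ) {q : ℕ × ℝ}
    (hq : Adm2 w q) : M w σ q.1 v ≤ F2 w σ v q := by
  rcases hq with ⟨h1, h2⟩ | ⟨h1, h2, h3⟩
  · have : q = (0, 0) := Prod.ext h1 h2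
    rw [this, F2_at_zero, M_zero' hw4]
  · have h := A_min hw0 hw4 hσ h1 v h2 h3
    have hsq : (0:ℝ) ≤ (q.2 - A w σ q.1 v) ^ 2 / (2 * σ) := by positivity
    have : (q.1, q.2) = q := rfl
    rw [M]
    rw [this] at h
    linarith

lemma uniqueMin_layer (hw0 : 0 < w) (hw4 : w < 4) (hσ : 0 < σ) {v : ℝ} {k : ℕ}
    (h1 : DD w σ k v < 0) (h2 : 0 < DD w σ (k + 1) v) :
    UniqueMin2 w σ v (k + 1, A w σ (k + 1) v) := by
  have hl : 1 ≤ k + 1 := Nat.le_add_left 1 k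
  obtain ⟨hm1, hm2⟩ := A_mem hw0 hw4 hσ hl (σ := σ) v
  have hadm : Adm2 w (k + 1, A w σ (k + 1) v) := Or.inr ⟨hl, by
    constructor
    · exact hm1
    · rw [show (4:ℝ) * ((k+1:ℕ):ℝ) = 4 * ((k+1:ℕ):ℝ) from rfl]
      exact le_of_lt hm2⟩
  have hFp : F2 w σ v (k + 1, A w σ (k + 1) v) = M w σ (k + 1) v := rfl
  refine ⟨hadm, ?_, ?_⟩
  · intro q hq
    calc F2 w σ v (k + 1, A w σ (k + 1) v) = M w σ (k + 1) v := hFp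
      _ ≤ M w σ q.1 v := M_glob_le hw0 hw4 hσ (le_of_lt h1) (le_of_lt h2) q.1
      _ ≤ F2 w σ v q := F2_ge_M hw0 hw4 hσ v hq
  · intro q hq hqmin
    have hqle : F2 w σ v q ≤ M w σ (k + 1) v := by
      rw [← hFp]; exact hqmin _ hadm
    have hq1 : q.1 = k + 1 := by
      by_contra hne
      have := M_glob_strict hw0 hw4 hσ h1 h2 q.1 hne
      have h4 := F2_ge_M hw0 hw4 hσ v hq
      linarith
    -- now q.2 must equal A
    have hfeas : ((k+1:ℕ):ℝ) * w ≤ q.2 ∧ q.2 ≤ 4 * ((k+1:ℕ):ℝ) := by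
      rcases hq with ⟨ha, hb⟩ | ⟨ha, hb, hc⟩
      · exfalso; rw [hq1] at ha; exact Nat.succ_ne_zero k ha
      · rw [hq1] at hb hc; exact ⟨hb, hc⟩
    have h := A_min hw0 hw4 hσ hl v hfeas.1 hfeas.2
    have hq' : (((k+1:ℕ)), q.2) = q := by
      rw [← hq1]
    rw [hq'] at h
    have hsq : (q.2 - A w σ (k + 1) v) ^ 2 / (2 * σ) ≤ 0 := by
      rw [← hFp] at hqle
      rw [hFp] at h
      linarith
    have h5 : (0:ℝ) ≤ (q.2 - A w σ (k + 1) v) ^ 2 / (2 * σ) := by positivity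
    have h6 : (q.2 - A w σ (k + 1) v) ^ 2 / (2 * σ) = 0 := le_antisymm hsq h5
    have h7 : q.2 - A w σ (k + 1) v = 0 := by
      field_simp at h6
      simpa using h6
    exact Prod.ext hq1 (by linarith)

lemma uniqueMin_zero (hw0 : 0 < w) (hw4 : w < 4) (hσ : 0 < σ) {v : ℝ}
    (h2 : 0 < DD w σ 0 v) : UniqueMin2 w σ v (0, 0) := by
  have hadm : Adm2 w ((0:ℕ), (0:ℝ)) := Or.inl ⟨rfl, rfl⟩
  refine ⟨hadm, ?_, ?_⟩
  · intro q hq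
    rw [F2_at_zero]
    rcases Nat.eq_zero_or_pos q.1 with h0 | h0
    · rcases hq with ⟨ha, hb⟩ | ⟨ha, hb, hc⟩
      · have : q = (0, 0) := Prod.ext ha hb
        rw [this, F2_at_zero]
      · omega
    · have hup := M_up hw0 hw4 hσ h2 (q.1 - 1)
      rw [show 0 + (q.1 - 1) + 1 = q.1 by omega] at hup
      rw [M_zero' hw4] at hup
      calc (0:ℝ) ≤ M w σ q.1 v := le_of_lt hup
        _ ≤ F2 w σ v q := F2_ge_M hw0 hw4 hσ v hq
  · intro q hq hqmin
    rcases Nat.eq_zero_or_pos q.1 with h0 | h0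
    · rcases hq with ⟨ha, hb⟩ | ⟨ha, hb, hc⟩
      · exact Prod.ext ha hb
      · omega
    · exfalso
      have hqle : F2 w σ v q ≤ 0 := by
        rw [← F2_at_zero (w := w) (σ := σ) v]
        exact hqmin _ hadm
      have hup := M_up hw0 hw4 hσ h2 (q.1 - 1)
      rw [show 0 + (q.1 - 1) + 1 = q.1 by omega] at hup
      rw [M_zero' hw4] at hup
      have h4 := F2_ge_M hw0 hw4 hσ v hq
      linarith

end chain

section assemble
variable {w σ : ℝ}

lemma vs_succ_eq (n : ℕ) :
    (fun n : ℕ => if n = 0 then (0:ℝ) else zz w σ (n - 1)) (n + 1) = zz w σ n := by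
  simp

end assemble
end VP2


/-- the structure theorem for the type-2 variational problem `VP²_v`. -/
theorem structure_theorem_type2 (w σ : ℝ) (hw0 : 0 < w) (hw4 : w < 4) (hσ : 0 < σ)
    (hnd : ∀ n : ℕ, (n : ℝ) ≠ 4 / (4 - w)) :
    ∃ vs am ap : ℕ → ℝ,
      -- strictly increasing critical slopes `0 = v₀* < v₁* < ⋯`
      vs 0 = 0 ∧ StrictMono vs ∧
      -- strictly increasing areas `0 = a₀⁺ < a₁⁻ < a₁⁺ < a₂⁻ < ⋯`
      ap 0 = 0 ∧ (∀ ℓ : ℕ, 1 ≤ ℓ → ap (ℓ - 1) < am ℓ ∧ am ℓ < ap ℓ) ∧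
      (∀ ℓ : ℕ, 1 ≤ ℓ → am ℓ ∈ Set.Icc ((ℓ : ℝ) * w) (4 * (ℓ : ℝ)) ∧
        ap ℓ ∈ Set.Icc ((ℓ : ℝ) * w) (4 * (ℓ : ℝ))) ∧
      -- (1) for `v ∈ [0, v₁*)` the empty stack is the unique minimizer
      (∀ v : ℝ, 0 ≤ v → v < vs 1 → UniqueMin2 w σ v (0, 0)) ∧
      -- (2) if `v_ℓ* < 1 + ℓw/σ`, then `a_ℓ⁻ = ℓw` and for `v ∈ (v_ℓ*, 1 + ℓw/σ)`
      -- the unique minimizer is `(ℓ, ℓw)`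
      (∀ ℓ : ℕ, 1 ≤ ℓ → vs ℓ < 1 + (ℓ : ℝ) * w / σ →
        am ℓ = (ℓ : ℝ) * w ∧
        ∀ v : ℝ, vs ℓ < v → v < 1 + (ℓ : ℝ) * w / σ →
          UniqueMin2 w σ v (ℓ, (ℓ : ℝ) * w)) ∧
      -- (3) a continuous increasing bijection
      -- `a_ℓ : [max(v_ℓ*, 1+ℓw/σ), v_{ℓ+1}*] → [a_ℓ⁻, a_ℓ⁺]` through unique minimizers
      (∀ ℓ : ℕ, 1 ≤ ℓ → ∃ aℓ : ℝ → ℝ,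
        ContinuousOn aℓ (Set.Icc (max (vs ℓ) (1 + (ℓ : ℝ) * w / σ)) (vs (ℓ + 1))) ∧
        StrictMonoOn aℓ (Set.Icc (max (vs ℓ) (1 + (ℓ : ℝ) * w / σ)) (vs (ℓ + 1))) ∧
        aℓ (max (vs ℓ) (1 + (ℓ : ℝ) * w / σ)) = am ℓ ∧ aℓ (vs (ℓ + 1)) = ap ℓ ∧
        ∀ v ∈ Set.Ioo (max (vs ℓ) (1 + (ℓ : ℝ) * w / σ)) (vs (ℓ + 1)),
          UniqueMin2 w σ v (ℓ, aℓ v)) ∧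
      -- (4) coexistence at each critical slope, and jump of the per-layer areas
      (∀ ℓ : ℕ, 1 ≤ ℓ →
        F2 w σ (vs ℓ) (ℓ - 1, ap (ℓ - 1)) = F2 w σ (vs ℓ) (ℓ, am ℓ) ∧
        Adm2 w (ℓ - 1, ap (ℓ - 1)) ∧
        (∀ q, Adm2 w q → F2 w σ (vs ℓ) (ℓ, am ℓ) ≤ F2 w σ (vs ℓ) q)) ∧
      (∀ ℓ : ℕ, 2 ≤ ℓ → am ℓ / (ℓ : ℝ) < ap (ℓ - 1) / ((ℓ : ℝ) - 1)) := by
  classical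
  open VP2 in
  refine ⟨fun n => if n = 0 then 0 else zz w σ (n - 1),
    fun n => A w σ n (if n = 0 then 0 else zz w σ (n - 1)),
    fun n => A w σ n (if n + 1 = 0 then 0 else zz w σ n), ?_, ?_, ?_, ?_, ?_, ?_, ?_, ?_, ?_, ?_⟩
  · simp
  · -- StrictMono vs
    apply strictMono_nat_of_lt_succ
    intro n
    rcases Nat.eq_zero_or_pos n with h | h
    · subst h
      simp only [if_pos rfl, if_neg (Nat.one_ne_zero)]
      exact (VP2.zz_spec hw0 hw4 hσ 0).1
    · have hn1 : n ≠ 0 := by omega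
      have hn2 : n + 1 ≠ 0 := by omega
      simp only [if_neg hn1, if_neg hn2]
      have : n - 1 + 1 = (n + 1) - 1 := by omega
      rw [show (n+1) - 1 = (n-1) + 1 by omega]
      exact VP2.zz_lt_zz hw0 hw4 hσ (n - 1)
  · -- ap 0 = 0
    simp only [Nat.zero_add, if_neg Nat.one_ne_zero]
    exact VP2.A_zero _
  · -- chain
    intro ℓ hℓ
    obtain ⟨k, rfl⟩ : ∃ k, ℓ = k + 1 := ⟨ℓ - 1, by omega⟩
    simp only [Nat.add_sub_cancel, if_neg (Nat.succ_ne_zero k)]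
    constructor
    · -- ap k < am (k+1): both at slope zz k
      exact VP2.A_lt_A hw0 hw4 hσ (Nat.lt_succ_self k) _
    · -- am (k+1) < ap (k+1)
      simp only [if_neg (by omega : k + 1 + 1 ≠ 0), Nat.add_sub_cancel]
      rcases le_or_gt (VP2.crit w σ (k+1)) (zz w σ k) with hcase | hcase
      · exact VP2.A_strict_mono hw0 hw4 hσ (Nat.le_add_left 1 k) hcase
          (VP2.zz_lt_zz hw0 hw4 hσ k)
      · rw [VP2.A_of_le (le_of_lt hcase)]
        have h1 : A w σ (k+1) (VP2.crit w σ (k+1)) = ((k+1:ℕ):ℝ) * w :=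
          VP2.A_of_le (le_refl _)
        rw [← h1]
        exact VP2.A_strict_mono hw0 hw4 hσ (Nat.le_add_left 1 k) (le_refl _)
          (VP2.zz_gt_crit hw0 hw4 hσ (k+1))
  · -- membership
    intro ℓ hℓ
    have h1 := VP2.A_mem hw0 hw4 hσ hℓ (σ := σ) (if ℓ = 0 then 0 else zz w σ (ℓ - 1))
    have h2 := VP2.A_mem hw0 hw4 hσ hℓ (σ := σ) (if ℓ + 1 = 0 then 0 else zz w σ ℓ)
    exact ⟨⟨h1.1, le_of_lt h1.2⟩, ⟨h2.1, le_of_lt h2.2⟩⟩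
  · -- (1)
    intro v hv0 hv1
    simp only [if_neg Nat.one_ne_zero] at hv1
    exact VP2.uniqueMin_zero hw0 hw4 hσ (VP2.DD_pos_of_lt hw0 hw4 hσ hv1)
  · -- (2)
    intro ℓ hℓ hvc
    obtain ⟨k, rfl⟩ : ∃ k, ℓ = k + 1 := ⟨ℓ - 1, by omega⟩
    simp only [if_neg (Nat.succ_ne_zero k), Nat.add_sub_cancel] at hvc ⊢
    have hvc' : zz w σ k < VP2.crit w σ (k+1) := hvc
    constructor
    · exact VP2.A_of_le (le_of_lt hvc')
    · intro v hv1 hv2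
      have hd1 : DD w σ k v < 0 := VP2.DD_neg_of_gt hw0 hw4 hσ hv1
      have hd2 : 0 < DD w σ (k+1) v := by
        apply VP2.DD_pos_of_lt hw0 hw4 hσ
        calc v < VP2.crit w σ (k+1) := hv2
          _ < zz w σ (k+1) := VP2.zz_gt_crit hw0 hw4 hσ (k+1)
      have h := VP2.uniqueMin_layer hw0 hw4 hσ hd1 hd2
      rwa [VP2.A_of_le (le_of_lt (show v < VP2.crit w σ (k+1) from hv2))] at h
  · -- (3)
    intro ℓ hℓ
    obtain ⟨k, rfl⟩ : ∃ k, ℓ = k + 1 := ⟨ℓ - 1, by omega⟩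
    refine ⟨A w σ (k+1), ?_, ?_, ?_, ?_, ?_⟩
    · exact (VP2.A_continuous hw0 hw4 hσ (Nat.le_add_left 1 k)).continuousOn
    · intro x hx y hy hxy
      apply VP2.A_strict_mono hw0 hw4 hσ (Nat.le_add_left 1 k) _ hxy
      exact le_trans (le_max_right _ _) hx.1
    · -- value at left endpoint
      simp only [if_neg (Nat.succ_ne_zero k), Nat.add_sub_cancel]
      rw [show (1 + ((k+1:ℕ):ℝ) * w / σ) = VP2.crit w σ (k+1) from rfl]
      rcases le_or_gt (VP2.crit w σ (k+1)) (zz w σ k) with hcase | hcase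
      · rw [max_eq_left hcase]
      · rw [max_eq_right (le_of_lt hcase)]
        rw [VP2.A_of_le (le_of_lt hcase), VP2.A_of_le (le_refl _)]
    · simp only [if_neg (Nat.succ_ne_zero (k+1)), Nat.add_sub_cancel]
    · intro v hv
      simp only [Set.mem_Ioo, if_neg (Nat.succ_ne_zero k), if_neg (Nat.succ_ne_zero (k+1)),
        Nat.add_sub_cancel] at hv
      have hd1 : DD w σ k v < 0 := by
        apply VP2.DD_neg_of_gt hw0 hw4 hσ
        exact lt_of_le_of_lt (le_max_left _ _) hv.1
      have hd2 : 0 < DD w σ (k+1) v := VP2.DD_pos_of_lt hw0 hw4 hσ hv.2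
      exact VP2.uniqueMin_layer hw0 hw4 hσ hd1 hd2
  · -- (4)
    intro ℓ hℓ
    obtain ⟨k, rfl⟩ : ∃ k, ℓ = k + 1 := ⟨ℓ - 1, by omega⟩
    simp only [if_neg (Nat.succ_ne_zero k), Nat.add_sub_cancel]
    have hDD0 : DD w σ k (zz w σ k) = 0 := (VP2.zz_spec hw0 hw4 hσ k).2
    refine ⟨?_, ?_, ?_⟩
    · -- coexistence
      show M w σ k (zz w σ k) = M w σ (k+1) (zz w σ k)
      rw [VP2.DD] at hDD0
      linarith
    · -- admissibility
      rcases Nat.eq_zero_or_pos k with h | h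
      · subst h
        exact Or.inl ⟨rfl, VP2.A_zero _⟩
      · refine Or.inr ⟨h, ?_, ?_⟩
        · exact (VP2.A_mem hw0 hw4 hσ h _).1
        · exact le_of_lt (VP2.A_mem hw0 hw4 hσ h _).2
    · -- global minimality
      intro q hq
      have h1 : DD w σ k (zz w σ k) ≤ 0 := le_of_eq hDD0
      have h2 : 0 ≤ DD w σ (k+1) (zz w σ k) := by
        apply le_of_lt
        calc (0:ℝ) = DD w σ k (zz w σ k) := hDD0.symm
          _ < DD w σ (k+1) (zz w σ k) := VP2.DD_lt_DD hw0 hw4 hσ k _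
      calc F2 w σ (zz w σ k) (k + 1, A w σ (k+1) (zz w σ k))
          = M w σ (k+1) (zz w σ k) := rfl
        _ ≤ M w σ q.1 (zz w σ k) := VP2.M_glob_le hw0 hw4 hσ h1 h2 q.1
        _ ≤ F2 w σ (zz w σ k) q := VP2.F2_ge_M hw0 hw4 hσ _ hq
  · -- per-layer jump
    intro ℓ hℓ
    obtain ⟨k, rfl⟩ : ∃ k, ℓ = k + 2 := ⟨ℓ - 2, by omega⟩
    have hc : (0:ℝ) < 4 - w := by linarith
    simp only [show k + 2 - 1 = k + 1 from rfl, if_neg (Nat.succ_ne_zero (k+1)),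
      if_neg (Nat.succ_ne_zero (k+1+1))]
    rw [show k + 1 + 1 = k + 2 from rfl]
    -- goal : A (k+2) (zz (k+1)) / ↑(k+2) < A (k+1) (zz (k+1)) / (↑(k+2) - 1)
    set v' := zz w σ (k+1) with hv'
    set a := A w σ (k+1) v' with ha
    set a' := A w σ (k+2) v' with ha'
    have hk1 : (0:ℝ) < ((k+1:ℕ):ℝ) := by positivity
    have hk2' : ((k+2:ℕ):ℝ) = (k:ℝ) + 2 := by push_cast; ring
    have hk1' : ((k+1:ℕ):ℝ) = (k:ℝ) + 1 := by push_cast; ring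
    have hvgt : VP2.crit w σ (k+1) < v' := VP2.zz_gt_crit hw0 hw4 hσ (k+1)
    obtain ⟨haw, ha4, hfa⟩ := VP2.A_of_gt hw0 hw4 hσ (Nat.le_add_left 1 k) hvgt
    rw [← ha] at haw ha4 hfa
    have hgtw : ((k+1:ℕ):ℝ) * w < a := by
      have h1 := VP2.A_strict_mono hw0 hw4 hσ (Nat.le_add_left 1 k) (le_refl _) hvgt
      rw [VP2.A_of_le (le_refl _), ← ha] at h1
      exact h1
    have hapos : 0 < a := lt_of_le_of_lt (by positivity) hgtw
    have hgoal : a' / ((k:ℝ) + 2) < a / ((k:ℝ) + 1) → a' / (((k+2:ℕ)):ℝ) < a / ((((k+2:ℕ)):ℝ) - 1) := by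
      intro h
      rw [hk2', show (k:ℝ) + 2 - 1 = (k:ℝ) + 1 by ring]
      exact h
    apply hgoal
    rcases le_or_gt v' (VP2.crit w σ (k+2)) with hcase | hcase
    · -- a' = (k+2) w
      have ha'eq : a' = ((k+2:ℕ):ℝ) * w := by rw [ha']; exact VP2.A_of_le hcase
      rw [ha'eq, hk2']
      rw [div_lt_div_iff₀ (by positivity) (by positivity)]
      rw [hk1'] at hgtw
      nlinarith
    · obtain ⟨haw', ha4', hfa'⟩ := VP2.A_of_gt hw0 hw4 hσ (by omega) hcase
      rw [← ha'] at haw' ha4' hfa'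
      have ha'pos : 0 < a' := lt_of_lt_of_le (by positivity) haw'
      by_contra hcon
      push_neg at hcon
      have hcross : a * ((k:ℝ) + 2) ≤ a' * ((k:ℝ) + 1) := by
        rw [div_le_div_iff₀ (by positivity) (by positivity)] at hcon
        exact hcon
      -- compare the sqrt terms of hfun
      have harg1 : (0:ℝ) < (4 * ((k+1:ℕ):ℝ) - a) * ((4 - w) * ((k+1:ℕ):ℝ)) := by
        apply mul_pos (by linarith) (by positivity)
      have harg2 : (0:ℝ) < (4 * ((k+2:ℕ):ℝ) - a') * ((4 - w) * ((k+2:ℕ):ℝ)) := by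
        apply mul_pos (by linarith) (by positivity)
      set X := (4 - w) * ((k+1:ℕ):ℝ) / Real.sqrt ((4 * ((k+1:ℕ):ℝ) - a) * ((4 - w) * ((k+1:ℕ):ℝ))) with hX
      set X' := (4 - w) * ((k+2:ℕ):ℝ) / Real.sqrt ((4 * ((k+2:ℕ):ℝ) - a') * ((4 - w) * ((k+2:ℕ):ℝ))) with hX'
      have hXnn : 0 ≤ X := by
        apply div_nonneg (by positivity) (Real.sqrt_nonneg _)
      have hX2 : X ^ 2 = ((4 - w) * ((k+1:ℕ):ℝ)) ^ 2
          / ((4 * ((k+1:ℕ):ℝ) - a) * ((4 - w) * ((k+1:ℕ):ℝ))) := by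
        rw [hX, div_pow, VP2.sq_sqrt_arg hw4 (le_of_lt ha4)]
      have hX'2 : X' ^ 2 = ((4 - w) * ((k+2:ℕ):ℝ)) ^ 2
          / ((4 * ((k+2:ℕ):ℝ) - a') * ((4 - w) * ((k+2:ℕ):ℝ))) := by
        rw [hX', div_pow, VP2.sq_sqrt_arg hw4 (le_of_lt ha4')]
      have hsq : X ^ 2 ≤ X' ^ 2 := by
        rw [hX2, hX'2, div_le_div_iff₀ harg1 harg2, hk1', hk2']
        have hfac : (0:ℝ) < (4 - w) ^ 3 * ((k:ℝ) + 1) * ((k:ℝ) + 2) := by positivity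
        have hkey : ((4-w)*((k:ℝ)+1))^2 * ((4*((k:ℝ)+2) - a')*((4-w)*((k:ℝ)+2)))
            - ((4-w)*((k:ℝ)+2))^2 * ((4*((k:ℝ)+1) - a)*((4-w)*((k:ℝ)+1)))
            = (4-w)^3*((k:ℝ)+1)*((k:ℝ)+2) * (a*((k:ℝ)+2) - a'*((k:ℝ)+1)) := by ring
        have h2 : (4-w)^3*((k:ℝ)+1)*((k:ℝ)+2) * (a*((k:ℝ)+2) - a'*((k:ℝ)+1)) ≤ 0 :=
          mul_nonpos_of_nonneg_of_nonpos (le_of_lt hfac) (by linarith)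
        linarith
      have hXle : X ≤ X' := by
        by_contra hxx
        push_neg at hxx
        have hX'nn : 0 ≤ X' := div_nonneg (by positivity) (Real.sqrt_nonneg _)
        have := pow_lt_pow_left₀ hxx hX'nn (by norm_num : (2:ℕ) ≠ 0)
        linarith
      have haa : a < a' := by nlinarith
      have hfe1 : X + a / σ = v' := hfa
      have hfe2 : X' + a' / σ = v' := hfa'
      have : a / σ < a' / σ := by
        apply div_lt_div_of_pos_right haa hσ
      linarith
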